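/- Let β > 1 and let m, n be positive integers. Define p = 1/(6(m+n)) and suppose j* is a positive integer with j* ≥ 6(m+n)·max{log n, 2(β-1)}. Then ∑_{j=j*+1}^∞ j^{β-1} · n · (1 - 1/(m+n))^{j/3} ≤ (j*)^β / ((β-1)·n). -/

import Mathlib

open Real

set_option maxHeartbeats 1000000 in
theorem stmt5 (β : ℝ) (hβ : 1 < β) (m n : ℕ) (hm : 0 < m) (hn : 0 < n)
    (js : ℕ) (hjs : 0 < js)
    (h : (js : ℝ) ≥ 6 * (m + n) * max (Real.log n) (2 * (β - 1))) :
    ∑' j : ℕ, (((j + js + 1 : ℕ) : ℝ) ^ (β - 1) * n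
        * (1 - 1 / (m + n : ℝ)) ^ (((j + js + 1 : ℕ) : ℝ) / 3))
      ≤ (js : ℝ) ^ β / ((β - 1) * n) := by
  have hm1 : (1:ℝ) ≤ m := by exact_mod_cast hm
  have hn1 : (1:ℝ) ≤ n := by exact_mod_cast hn
  set N : ℝ := (m:ℝ) + n with hNdef
  have hN2 : (2:ℝ) ≤ N := by simp only [hNdef]; linarith
  have hN0 : (0:ℝ) < N := by linarith
  set p : ℝ := 1 / (6 * N) with hpdef
  have hp0 : 0 < p := by positivity
  have hp12 : p ≤ 1/12 := by
    rw [hpdef, div_le_div_iff₀ (by positivity) (by norm_num)]; linarith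
  set q : ℝ := 1 - 1/N with hqdef
  have h6p : 1/N = 6 * p := by rw [hpdef]; field_simp
  have hq0 : 0 ≤ q := by
    have : 1/N ≤ 1/2 := by rw [div_le_div_iff₀ hN0 (by norm_num)]; linarith
    simp only [hqdef]; linarith
  have hqe : q ≤ exp (-(6*p)) := by
    have := Real.add_one_le_exp (-(6*p))
    simp only [hqdef, h6p]; linarith
  set D := β - 1 with hDdef
  have hD0 : 0 < D := by simp only [hDdef]; linarith
  set s : ℝ := (js:ℝ) with hsdef
  have hs0 : (0:ℝ) < s := by simp only [hsdef]; exact_mod_cast hjs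
  have hs1 : (0:ℝ) < s + 1 := by linarith
  -- consequences of h
  have hmax : max (Real.log n) (2 * D) ≤ p * s := by
    rw [hpdef, div_mul_eq_mul_div, one_mul, le_div_iff₀ (by positivity)]
    calc max (Real.log n) (2 * D) * (6 * N) = 6 * N * max (Real.log n) (2*D) := by ring
    _ ≤ s := h
  have hlog : Real.log n ≤ p * s := le_trans (le_max_left _ _) hmax
  have h2D : 2 * D ≤ p * s := le_trans (le_max_right _ _) hmax
  have hn_exp : (n:ℝ) ≤ exp (p*s) := by
    calc (n:ℝ) = exp (Real.log n) := (Real.exp_log (by positivity)).symm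
    _ ≤ exp (p*s) := exp_le_exp.mpr hlog
  have hexpn : exp (-(p*s)) ≤ 1/n := by
    rw [Real.exp_neg, one_div]
    gcongr
  -- geometric ratio and amplitude
  set r : ℝ := exp (-p) with hrdef
  have hr0 : 0 < r := exp_pos _
  have hr1 : r < 1 := by
    rw [hrdef, show (1:ℝ) = exp 0 by simp]
    exact exp_lt_exp.mpr (by linarith)
  have h1r : 0 < 1 - r := by linarith
  set A : ℝ := (s+1)^D * n * exp (-(2*p)*(s+1)) with hAdef
  have hA0 : 0 ≤ A := by
    apply mul_nonneg (mul_nonneg (Real.rpow_nonneg hs1.le D) (by positivity)) (exp_pos _).le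
  have hDp : D ≤ p * (s+1) := by nlinarith
  -- termwise bound
  have hbound : ∀ j : ℕ, ((j + js + 1 : ℕ) : ℝ) ^ D * n * q ^ (((j + js + 1 : ℕ) : ℝ)/3)
      ≤ A * r ^ j := by
    intro j
    have hx0 : (0:ℝ) ≤ j := Nat.cast_nonneg j
    have hcast : ((j + js + 1 : ℕ) : ℝ) = (j:ℝ) + s + 1 := by
      simp only [hsdef]; push_cast; ring
    rw [hcast]
    set x : ℝ := (j:ℝ) with hxdef
    have hk0 : 0 < x + s + 1 := by linarith
    have hq3 : q ^ ((x+s+1)/3) ≤ exp (-(2*p)*(x+s+1)) := by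
      calc q ^ ((x+s+1)/3) ≤ (exp (-(6*p))) ^ ((x+s+1)/3) :=
            Real.rpow_le_rpow hq0 hqe (by positivity)
      _ = exp (-(6*p) * ((x+s+1)/3)) := (Real.exp_mul _ _).symm
      _ = exp (-(2*p)*(x+s+1)) := by ring_nf
    have hbase : (x+s+1)^D ≤ (s+1)^D * exp (D * (x/(s+1))) := by
      rw [show x+s+1 = (s+1) * (1 + x/(s+1)) by field_simp; ring,
        Real.mul_rpow hs1.le (by positivity)]
      gcongr (s+1)^D * ?_
      calc (1 + x/(s+1))^D ≤ (exp (x/(s+1)))^D :=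
            Real.rpow_le_rpow (by positivity)
              (by linarith [Real.add_one_le_exp (x/(s+1))]) hD0.le
      _ = exp ((x/(s+1)) * D) := (Real.exp_mul _ _).symm
      _ = exp (D * (x/(s+1))) := by ring_nf
    have hkey : D*(x/(s+1)) ≤ p * x := by
      have h1 : D/(s+1) ≤ p := (div_le_iff₀ hs1).mpr hDp
      calc D*(x/(s+1)) = (D/(s+1))*x := by ring
      _ ≤ p*x := mul_le_mul_of_nonneg_right h1 hx0
    calc (x+s+1)^D * n * q ^ ((x+s+1)/3)
        ≤ ((s+1)^D * exp (D * (x/(s+1)))) * n * exp (-(2*p)*(x+s+1)) := by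
          apply mul_le_mul (mul_le_mul_of_nonneg_right hbase (by positivity)) hq3
            (Real.rpow_nonneg hq0 _)
          positivity
      _ = (s+1)^D * n * exp (D * (x/(s+1)) + -(2*p)*(x+s+1)) := by
          rw [Real.exp_add]; ring
      _ ≤ (s+1)^D * n * exp (-(2*p)*(s+1) + -p*x) := by
          refine mul_le_mul_of_nonneg_left (exp_le_exp.mpr (by linarith)) ?_
          exact mul_nonneg (Real.rpow_nonneg hs1.le D) (Nat.cast_nonneg n)
      _ = A * r ^ j := by
          rw [hAdef, hrdef, Real.exp_add, ← Real.exp_nat_mul]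
          rw [show ((j:ℕ):ℝ) * (-p) = -p * x by rw [hxdef]; ring]
          ring
  -- summability
  have hgeo : Summable (fun j : ℕ => A * r ^ j) :=
    (summable_geometric_of_lt_one hr0.le hr1).mul_left A
  have hf : Summable (fun j : ℕ => ((j + js + 1 : ℕ) : ℝ) ^ D * n
      * q ^ (((j + js + 1 : ℕ) : ℝ)/3)) := by
    apply Summable.of_nonneg_of_le _ hbound hgeo
    intro j
    exact mul_nonneg (mul_nonneg (Real.rpow_nonneg (Nat.cast_nonneg _) _)
      (Nat.cast_nonneg n)) (Real.rpow_nonneg hq0 _)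
  have htsum : ∑' j : ℕ, (((j + js + 1 : ℕ) : ℝ) ^ D * n
      * q ^ (((j + js + 1 : ℕ) : ℝ)/3)) ≤ A * (1-r)⁻¹ := by
    calc _ ≤ ∑' j : ℕ, A * r ^ j := Summable.tsum_le_tsum hbound hf hgeo
    _ = A * (1-r)⁻¹ := by rw [tsum_mul_left, tsum_geometric_of_lt_one hr0.le hr1]
  refine le_trans htsum ?_
  -- final numeric bound : A * (1-r)⁻¹ ≤ s^β / (D*n)
  have helog2 : (1:ℝ)/8 ≤ Real.log 2 := by linarith [Real.log_two_gt_d9]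
  have he2 : exp (p/2) ≤ 2 := by
    calc exp (p/2) ≤ exp (Real.log 2) := exp_le_exp.mpr (by linarith)
    _ = 2 := Real.exp_log (by norm_num)
  have hr_lb : p * exp (-p) ≤ 1 - r := by
    have h1 : 1 + p ≤ exp p := by linarith [Real.add_one_le_exp p]
    have hmul : exp (-p) * exp p = 1 := by rw [← Real.exp_add]; simp
    have h2 : exp (-p) * (1+p) ≤ 1 := by
      calc exp (-p) * (1+p) ≤ exp (-p) * exp p :=
            mul_le_mul_of_nonneg_left h1 (exp_pos (-p)).le
      _ = 1 := hmul
    calc p * exp (-p) = exp (-p) * (1+p) - exp (-p) := by ring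
    _ ≤ 1 - r := by rw [hrdef]; linarith
  have hb1 : (s+1)^D ≤ s^D * exp (p/2) := by
    rw [show s+1 = s*(1+1/s) by field_simp,
      Real.mul_rpow hs0.le (by positivity)]
    gcongr s^D * ?_
    have hds : D/s ≤ p/2 := by
      rw [div_le_div_iff₀ hs0 (by norm_num)]; linarith
    calc (1 + 1/s)^D ≤ (exp (1/s))^D :=
          Real.rpow_le_rpow (by positivity)
            (by linarith [Real.add_one_le_exp (1/s)]) hD0.le
    _ = exp ((1/s) * D) := (Real.exp_mul _ _).symm
    _ ≤ exp (p/2) := exp_le_exp.mpr (by rw [one_div_mul_eq_div]; exact hds)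
  have hb2 : (n:ℝ) * exp (-(2*p)*(s+1)) ≤ (1/n) * exp (-p) := by
    have e1 : exp (-(2*p)*(s+1)) = exp (-(p*s)) * exp (-(p*s)) * exp (-(2*p)) := by
      rw [← Real.exp_add, ← Real.exp_add]; ring_nf
    rw [e1]
    have h2p : exp (-(2*p)) ≤ exp (-p) := exp_le_exp.mpr (by linarith)
    calc (n:ℝ) * (exp (-(p*s)) * exp (-(p*s)) * exp (-(2*p)))
        ≤ (n:ℝ) * ((1/n) * (1/n) * exp (-p)) := by
          gcongr <;> positivity
      _ = (1/n) * exp (-p) := by field_simp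
  have hA_le : A ≤ (s^D * exp (p/2)) * ((1/n) * exp (-p)) := by
    calc A = (s+1)^D * ((n:ℝ) * exp (-(2*p)*(s+1))) := by rw [hAdef]; ring
    _ ≤ (s^D * exp (p/2)) * ((1/n) * exp (-p)) :=
        mul_le_mul hb1 hb2 (by positivity)
          (mul_nonneg (Real.rpow_nonneg hs0.le D) (exp_pos _).le)
  have hinv : (1-r)⁻¹ ≤ (p * exp (-p))⁻¹ := by
    gcongr
  calc A * (1-r)⁻¹ ≤ ((s^D * exp (p/2)) * ((1/n) * exp (-p))) * (p * exp (-p))⁻¹ :=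
        mul_le_mul hA_le hinv (inv_nonneg.mpr h1r.le)
          (by positivity)
    _ = s^D * exp (p/2) / (n * p) := by
        field_simp
    _ ≤ s^β / (D*n) := by
        rw [div_le_div_iff₀ (by positivity) (by positivity)]
        have hsβ : s^β = s^D * s := by
          rw [show β = D + 1 by simp [hDdef], Real.rpow_add hs0, Real.rpow_one]
        rw [hsβ]
        have hsD : (0:ℝ) ≤ s^D := Real.rpow_nonneg hs0.le D
        have hXY : s^D * exp (p/2) * D ≤ s^D * s * p := by
          nlinarith [mul_le_mul_of_nonneg_left he2 (mul_nonneg hsD hD0.le),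
            mul_le_mul_of_nonneg_left h2D hsD]
        have hfin := mul_le_mul_of_nonneg_right hXY (Nat.cast_nonneg n : (0:ℝ) ≤ n)
        nlinarith [hfin]
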